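/- arXiv:1901.06807 — 2 statements merged into one kernel-verified Lean document; each statement's English description precedes it below -/
import Mathlib

section
/- Let X and Y be positive definite n×n complex matrices and let p < 0 be real. Then Tr(X^p Y^{1-p}) ≥ p·Tr(X) + (1-p)·Tr(Y). -/
open Matrix ComplexOrder

variable {n : ℕ}

/-- Apply a real function to a matrix via the spectral decomposition (functional calculus).
Returns `0` if the matrix is not Hermitian. -/
noncomputable def matFun (f : ℝ → ℝ) (A : Matrix (Fin n) (Fin n) ℂ) :
    Matrix (Fin n) (Fin n) ℂ :=
  if hA : A.IsHermitian then
    (hA.eigenvectorUnitary : Matrix (Fin n) (Fin n) ℂ) *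
      Matrix.diagonal (fun i => (f (hA.eigenvalues i) : ℂ)) *
      (star hA.eigenvectorUnitary : Matrix (Fin n) (Fin n) ℂ)
  else 0

/-- Matrix power `A^r` by functional calculus. -/
noncomputable def mpow (A : Matrix (Fin n) (Fin n) ℂ) (r : ℝ) : Matrix (Fin n) (Fin n) ℂ :=
  matFun (fun t => t ^ r) A

/-- Deformed matrix logarithm `log_q`. -/
noncomputable def mlogq (q : ℝ) (A : Matrix (Fin n) (Fin n) ℂ) : Matrix (Fin n) (Fin n) ℂ :=
  matFun (fun t => if q = 1 then Real.log t else (t ^ (q - 1) - 1) / (q - 1)) A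

/-- Deformed matrix exponential `exp_q`. -/
noncomputable def mexpq (q : ℝ) (M : Matrix (Fin n) (Fin n) ℂ) : Matrix (Fin n) (Fin n) ℂ :=
  matFun (fun s => if q = 1 then Real.exp s else ((q - 1) * s + 1) ^ (1 / (q - 1))) M

/-- Real part of the trace. -/
noncomputable def rtr (A : Matrix (Fin n) (Fin n) ℂ) : ℝ := (Matrix.trace A).re

/-- Scalar deformed logarithm. -/
noncomputable def dlog (q t : ℝ) : ℝ := if q = 1 then Real.log t else (t ^ (q - 1) - 1) / (q - 1)

lemma scalar_young {a b p : ℝ} (ha : 0 < a) (hb : 0 < b) (hp : p < 0) :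
    p * a + (1 - p) * b ≤ a ^ p * b ^ (1 - p) := by
  have hq1 : 1 ≤ 1 - p := by linarith
  have hs : (-1 : ℝ) ≤ b / a - 1 := by
    have : 0 ≤ b / a := by positivity
    linarith
  have h := one_add_mul_self_le_rpow_one_add hs hq1
  rw [add_sub_cancel] at h
  have h2 := mul_le_mul_of_nonneg_left h ha.le
  have hdiv : (b / a) ^ (1 - p) = b ^ (1 - p) / a ^ (1 - p) := Real.div_rpow hb.le ha.le _
  have haq : 0 < a ^ (1 - p) := Real.rpow_pos_of_pos ha _
  have hap : a ^ p = a / a ^ (1 - p) := by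
    rw [eq_div_iff haq.ne', ← Real.rpow_add ha]
    norm_num
  calc p * a + (1 - p) * b = a * (1 + (1 - p) * (b / a - 1)) := by
        field_simp; ring
    _ ≤ a * (b / a) ^ (1 - p) := h2
    _ = a ^ p * b ^ (1 - p) := by
        rw [hdiv, hap]; field_simp

theorem reverse_tracial_young_neg {n : ℕ} (X Y : Matrix (Fin n) (Fin n) ℂ)
    (hX : X.PosDef) (hY : Y.PosDef) (p : ℝ) (hp : p < 0) :
    p * rtr X + (1 - p) * rtr Y ≤ rtr (mpow X p * mpow Y (1 - p)) := by
  classical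
  have hXh : X.IsHermitian := hX.1
  have hYh : Y.IsHermitian := hY.1
  set U : Matrix (Fin n) (Fin n) ℂ := (hXh.eigenvectorUnitary : Matrix (Fin n) (Fin n) ℂ) with hU
  set V : Matrix (Fin n) (Fin n) ℂ := (hYh.eigenvectorUnitary : Matrix (Fin n) (Fin n) ℂ) with hV
  set lam : Fin n → ℝ := hXh.eigenvalues with hlam
  set mu : Fin n → ℝ := hYh.eigenvalues with hmu
  have hlampos : ∀ i, 0 < lam i := fun i => hX.eigenvalues_pos i
  have hmupos : ∀ i, 0 < mu i := fun i => hY.eigenvalues_pos i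
  have hUU : U * star U = 1 := Matrix.mem_unitaryGroup_iff.mp hXh.eigenvectorUnitary.2
  have hUU' : star U * U = 1 := Matrix.mem_unitaryGroup_iff'.mp hXh.eigenvectorUnitary.2
  have hVV : V * star V = 1 := Matrix.mem_unitaryGroup_iff.mp hYh.eigenvectorUnitary.2
  have hVV' : star V * V = 1 := Matrix.mem_unitaryGroup_iff'.mp hYh.eigenvectorUnitary.2
  set Dp : Matrix (Fin n) (Fin n) ℂ := Matrix.diagonal (fun i => ((lam i ^ p : ℝ) : ℂ)) with hDp
  set Ep : Matrix (Fin n) (Fin n) ℂ :=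
    Matrix.diagonal (fun i => ((mu i ^ (1 - p) : ℝ) : ℂ)) with hEp
  have hmX : mpow X p = U * Dp * star U := by
    rw [mpow, matFun, dif_pos hXh]
  have hmY : mpow Y (1 - p) = V * Ep * star V := by
    rw [mpow, matFun, dif_pos hYh]
  set W : Matrix (Fin n) (Fin n) ℂ := star U * V with hW
  have hsW : star W = star V * U := by rw [hW, Matrix.star_mul, star_star]
  have hWW : W * star W = 1 := by
    rw [hW, hsW, Matrix.mul_assoc, ← Matrix.mul_assoc V, hVV, Matrix.one_mul, hUU']
  have hWW' : star W * W = 1 := by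
    rw [hW, hsW, Matrix.mul_assoc, ← Matrix.mul_assoc U, hUU, Matrix.one_mul, hVV']
  -- trace of X
  have hTrX : rtr X = ∑ i, lam i := by
    rw [rtr]
    conv_lhs => rw [hXh.spectral_theorem, Unitary.conjStarAlgAut_apply, Matrix.trace_mul_cycle,
      ← hU, hUU', Matrix.one_mul, Matrix.trace_diagonal]
    rw [Complex.re_sum]
    simp
    rfl
  have hTrY : rtr Y = ∑ i, mu i := by
    rw [rtr]
    conv_lhs => rw [hYh.spectral_theorem, Unitary.conjStarAlgAut_apply, Matrix.trace_mul_cycle,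
      ← hV, hVV', Matrix.one_mul, Matrix.trace_diagonal]
    rw [Complex.re_sum]
    simp
    rfl
  -- the product
  have hprodeq : mpow X p * mpow Y (1 - p) = U * (Dp * (W * (Ep * star W))) * star U := by
    rw [hmX, hmY, hW, hsW]
    simp only [Matrix.mul_assoc, hUU, Matrix.mul_one]
  have htrp : Matrix.trace (mpow X p * mpow Y (1 - p))
      = Matrix.trace (Dp * (W * (Ep * star W))) := by
    rw [hprodeq, Matrix.trace_mul_cycle, ← Matrix.mul_assoc, hUU', Matrix.one_mul]
  -- entrywise expansion
  have hentry : Matrix.trace (Dp * (W * (Ep * star W)))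
      = ∑ i, ∑ j, (((lam i ^ p) * (mu j ^ (1 - p)) * Complex.normSq (W i j) : ℝ) : ℂ) := by
    rw [hDp, hEp, Matrix.trace]
    refine Finset.sum_congr rfl fun i _ => ?_
    rw [Matrix.diag_apply, Matrix.diagonal_mul, Matrix.mul_apply, Finset.mul_sum]
    refine Finset.sum_congr rfl fun j _ => ?_
    rw [Matrix.diagonal_mul, Matrix.star_apply, Complex.star_def]
    push_cast
    rw [← Complex.mul_conj]
    ring
  -- doubly stochastic
  have hrow : ∀ i, ∑ j, Complex.normSq (W i j) = 1 := by
    intro i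
    have h := congrArg (fun M : Matrix (Fin n) (Fin n) ℂ => M i i) hWW
    simp only [Matrix.mul_apply, Matrix.star_apply, Matrix.one_apply_eq] at h
    have h2 : ((∑ j, Complex.normSq (W i j) : ℝ) : ℂ) = 1 := by
      push_cast
      rw [← h]
      exact Finset.sum_congr rfl fun j _ => (Complex.mul_conj _).symm
    exact_mod_cast h2
  have hcol : ∀ j, ∑ i, Complex.normSq (W i j) = 1 := by
    intro j
    have h := congrArg (fun M : Matrix (Fin n) (Fin n) ℂ => M j j) hWW'
    simp only [Matrix.mul_apply, Matrix.star_apply, Matrix.one_apply_eq] at h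
    have h2 : ((∑ i, Complex.normSq (W i j) : ℝ) : ℂ) = 1 := by
      push_cast
      rw [← h]
      exact Finset.sum_congr rfl fun i _ =>
        ((mul_comm _ _).trans (Complex.mul_conj (W i j))).symm
    exact_mod_cast h2
  -- assemble
  rw [hTrX, hTrY, rtr, htrp, hentry, Complex.re_sum]
  simp only [Complex.re_sum, Complex.ofReal_re]
  have hA : ∑ i, ∑ j, p * lam i * Complex.normSq (W i j) = p * ∑ i, lam i := by
    rw [Finset.mul_sum]
    refine Finset.sum_congr rfl fun i _ => ?_
    rw [← Finset.mul_sum, hrow i, mul_one]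
  have hB : ∑ i, ∑ j, (1 - p) * mu j * Complex.normSq (W i j) = (1 - p) * ∑ j, mu j := by
    rw [Finset.sum_comm, Finset.mul_sum]
    refine Finset.sum_congr rfl fun j _ => ?_
    rw [← Finset.mul_sum, hcol j, mul_one]
  calc p * ∑ i, lam i + (1 - p) * ∑ j, mu j
      = ∑ i, ∑ j, (p * lam i + (1 - p) * mu j) * Complex.normSq (W i j) := by
        rw [← hA, ← hB, ← Finset.sum_add_distrib]
        refine Finset.sum_congr rfl fun i _ => ?_
        rw [← Finset.sum_add_distrib]
        refine Finset.sum_congr rfl fun j _ => ?_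
        ring
    _ ≤ ∑ i, ∑ j, lam i ^ p * mu j ^ (1 - p) * Complex.normSq (W i j) := by
        refine Finset.sum_le_sum fun i _ => Finset.sum_le_sum fun j _ => ?_
        exact mul_le_mul_of_nonneg_right (scalar_young (hlampos i) (hmupos j) hp)
          (Complex.normSq_nonneg _)
end

section
/- Let q ≤ 2 with q ≠ 1 and let Y be a positive definite n×n complex matrix. Then Tr(Y) equals the supremum over positive definite matrices X of Tr(X) - Tr(X^{2-q}(log_q X - log_q Y)), and this supremum is attained at X = Y. -/
open Matrix ComplexOrder

variable {n : ℕ}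

lemma scalar_key (q : ℝ) (hq : q ≤ 2) (hq1 : q ≠ 1) {x y : ℝ} (hx : 0 < x) (hy : 0 < y) :
    x - x ^ (2 - q) * (dlog q x - dlog q y) ≤ y := by
  set r : ℝ := q - 1 with hr
  have hr0 : r ≠ 0 := sub_ne_zero.mpr hq1
  have hr1 : r ≤ 1 := by simp only [hr]; linarith
  have hA : x ^ (2 - q) * (dlog q x - dlog q y) = (x - x ^ (1 - r) * y ^ r) / r := by
    simp only [dlog, if_neg hq1, ← hr]
    rw [div_sub_div_same, sub_sub_sub_cancel_right]
    have h2q : (2 - q : ℝ) = 1 - r := by ring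
    rw [h2q, mul_div_assoc', mul_sub, ← Real.rpow_add hx]
    norm_num
  rw [hA]
  have key : x - y ≤ (x - x ^ (1 - r) * y ^ r) / r := by
    rcases lt_or_gt_of_ne hr0 with hneg | hpos
    · -- r < 0 : Bernoulli
      rw [le_div_iff_of_neg hneg]
      have hp : (1:ℝ) ≤ 1 - r := by linarith
      have hxy0 : 0 < x / y := div_pos hx hy
      have hs : (-1:ℝ) ≤ x / y - 1 := by linarith
      have hb := one_add_mul_self_le_rpow_one_add hs hp
      rw [show (1:ℝ) + (x / y - 1) = x / y by ring] at hb
      have hxy : x ^ (1 - r) * y ^ r = y * (x / y) ^ (1 - r) := by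
        rw [show r = 1 - (1 - r) by ring, Real.rpow_sub hy, Real.rpow_one,
          Real.div_rpow hx.le hy.le]
        ring
      have hyx : y * (x / y) = x := by field_simp
      nlinarith [mul_le_mul_of_nonneg_left hb hy.le]
    · rw [le_div_iff₀ hpos]
      have := Real.geom_mean_le_arith_mean2_weighted (by linarith : (0:ℝ) ≤ 1 - r)
        (le_of_lt hpos) hx.le hy.le (by ring)
      nlinarith
  linarith

lemma trace_formula (U V : Matrix (Fin n) (Fin n) ℂ) (a b : Fin n → ℝ) :
    Matrix.trace (U * Matrix.diagonal (fun i => (a i : ℂ)) * star U *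
      (V * Matrix.diagonal (fun j => (b j : ℂ)) * star V))
    = ((∑ i, ∑ j, Complex.normSq ((star U * V) i j) * (a i * b j) : ℝ) : ℂ) := by
  set W := star U * V with hW
  have h1 : U * Matrix.diagonal (fun i => (a i : ℂ)) * star U *
      (V * Matrix.diagonal (fun j => (b j : ℂ)) * star V)
      = U * (Matrix.diagonal (fun i => (a i : ℂ)) * (star U *
        (V * (Matrix.diagonal (fun j => (b j : ℂ)) * star V)))) := by
    simp [Matrix.mul_assoc]
  rw [h1, Matrix.trace_mul_comm]
  have h2 : Matrix.diagonal (fun i => (a i : ℂ)) * (star U *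
        (V * (Matrix.diagonal (fun j => (b j : ℂ)) * star V))) * U
      = Matrix.diagonal (fun i => (a i : ℂ)) * W * Matrix.diagonal (fun j => (b j : ℂ)) * star W := by
    rw [hW, Matrix.star_mul, star_star]
    simp [Matrix.mul_assoc]
  rw [h2, Matrix.trace]
  push_cast
  refine Finset.sum_congr rfl fun i _ => ?_
  show (Matrix.diagonal (fun i => (a i : ℂ)) * W * Matrix.diagonal (fun j => (b j : ℂ)) * star W) i i = _
  rw [Matrix.mul_apply]
  refine Finset.sum_congr rfl fun j _ => ?_
  rw [Matrix.mul_diagonal, Matrix.diagonal_mul, Matrix.star_apply]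
  have hc : W i j * (starRingEnd ℂ) (W i j) = (Complex.normSq (W i j) : ℂ) := Complex.mul_conj _
  rw [Complex.star_def]
  calc (a i : ℂ) * W i j * (b j) * (starRingEnd ℂ) (W i j)
      = (W i j * (starRingEnd ℂ) (W i j)) * ((a i : ℂ) * b j) := by ring
    _ = (Complex.normSq (W i j) : ℂ) * ((a i : ℂ) * b j) := by rw [hc]

lemma trace_conj_diag (U : Matrix (Fin n) (Fin n) ℂ) (hU : star U * U = 1) (d : Fin n → ℂ) :
    Matrix.trace (U * Matrix.diagonal d * star U) = ∑ i, d i := by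
  rw [Matrix.mul_assoc, Matrix.trace_mul_comm, Matrix.mul_assoc, hU, Matrix.mul_one,
    Matrix.trace_diagonal]

lemma diag_sum_one {W : Matrix (Fin n) (Fin n) ℂ} (h : W * star W = 1) (i : Fin n) :
    ∑ j, Complex.normSq (W i j) = 1 := by
  have h2 : (W * star W) i i = (1 : Matrix (Fin n) (Fin n) ℂ) i i := by rw [h]
  rw [Matrix.mul_apply, Matrix.one_apply_eq] at h2
  have h3 : (((∑ j, Complex.normSq (W i j)) : ℝ) : ℂ) = 1 := by
    push_cast
    rw [← h2]
    refine Finset.sum_congr rfl fun j _ => ?_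
    rw [Matrix.star_apply, Complex.star_def, Complex.mul_conj]
  exact_mod_cast h3

theorem trace_variational_max {n : ℕ} (q : ℝ) (hq : q ≤ 2) (hq1 : q ≠ 1)
    (Y : Matrix (Fin n) (Fin n) ℂ) (hY : Y.PosDef) :
    (∀ X : Matrix (Fin n) (Fin n) ℂ, X.PosDef →
      rtr X - rtr (mpow X (2 - q) * (mlogq q X - mlogq q Y)) ≤ rtr Y) ∧
    rtr Y - rtr (mpow Y (2 - q) * (mlogq q Y - mlogq q Y)) = rtr Y := by
  have hYh := hY.1
  set V : Matrix (Fin n) (Fin n) ℂ := (hYh.eigenvectorUnitary : Matrix (Fin n) (Fin n) ℂ) with hVdef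
  set b : Fin n → ℝ := hYh.eigenvalues with hbdef
  have hV1 : star V * V = 1 := Matrix.mem_unitaryGroup_iff'.mp hYh.eigenvectorUnitary.2
  have hV2 : V * star V = 1 := Matrix.mem_unitaryGroup_iff.mp hYh.eigenvectorUnitary.2
  have hb : ∀ j, 0 < b j := fun j => hY.eigenvalues_pos j
  have hYtr : rtr Y = ∑ j, b j := by
    rw [rtr]
    conv_lhs => rw [hYh.spectral_theorem]
    rw [Unitary.conjStarAlgAut_apply, trace_conj_diag V hV1]
    have : (∑ i, (RCLike.ofReal ∘ hYh.eigenvalues) i : ℂ) = ((∑ i, b i : ℝ) : ℂ) := by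
      push_cast; rfl
    rw [this, Complex.ofReal_re]
  constructor
  · intro X hX
    have hXh := hX.1
    set U : Matrix (Fin n) (Fin n) ℂ := (hXh.eigenvectorUnitary : Matrix (Fin n) (Fin n) ℂ) with hUdef
    set a : Fin n → ℝ := hXh.eigenvalues with hadef
    have hU1 : star U * U = 1 := Matrix.mem_unitaryGroup_iff'.mp hXh.eigenvectorUnitary.2
    have hU2 : U * star U = 1 := Matrix.mem_unitaryGroup_iff.mp hXh.eigenvectorUnitary.2
    have ha : ∀ i, 0 < a i := fun i => hX.eigenvalues_pos i
    set W : Matrix (Fin n) (Fin n) ℂ := star U * V with hWdef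
    set w : Fin n → Fin n → ℝ := fun i j => Complex.normSq (W i j) with hwdef
    have hw0 : ∀ i j, 0 ≤ w i j := fun i j => Complex.normSq_nonneg _
    have hrow : ∀ i, ∑ j, w i j = 1 := by
      intro i
      refine diag_sum_one ?_ i
      rw [hWdef, Matrix.star_mul, star_star, Matrix.mul_assoc, ← Matrix.mul_assoc V,
        hV2, Matrix.one_mul, hU1]
    have hcol : ∀ j, ∑ i, w i j = 1 := by
      intro j
      have hsW : star W * W = 1 := by
        rw [hWdef, Matrix.star_mul, star_star, Matrix.mul_assoc, ← Matrix.mul_assoc U,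
          hU2, Matrix.one_mul, hV1]
      have := diag_sum_one (W := star W) (by rwa [star_star]) j
      simp only [Matrix.star_apply, Complex.star_def, Complex.normSq_conj] at this
      exact this
    have hXtr : rtr X = ∑ i, a i := by
      rw [rtr]
      conv_lhs => rw [hXh.spectral_theorem]
      rw [Unitary.conjStarAlgAut_apply, trace_conj_diag U hU1]
      have : (∑ i, (RCLike.ofReal ∘ hXh.eigenvalues) i : ℂ) = ((∑ i, a i : ℝ) : ℂ) := by
        push_cast; rfl
      rw [this, Complex.ofReal_re]
    have e1 : mpow X (2 - q) = U * Matrix.diagonal (fun i => ((a i ^ (2 - q) : ℝ) : ℂ)) * star U := by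
      rw [mpow, matFun, dif_pos hXh]
    have e2 : mlogq q X = U * Matrix.diagonal (fun i => ((dlog q (a i) : ℝ) : ℂ)) * star U := by
      rw [mlogq, matFun, dif_pos hXh]; rfl
    have e3 : mlogq q Y = V * Matrix.diagonal (fun j => ((dlog q (b j) : ℝ) : ℂ)) * star V := by
      rw [mlogq, matFun, dif_pos hYh]; rfl
    have hmid : rtr (mpow X (2 - q) * (mlogq q X - mlogq q Y))
        = (∑ i, ∑ j, Complex.normSq ((star U * U) i j) * (a i ^ (2 - q) * dlog q (a j)))
          - ∑ i, ∑ j, w i j * (a i ^ (2 - q) * dlog q (b j)) := by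
      rw [rtr, e1, e2, e3, Matrix.mul_sub, Matrix.trace_sub, trace_formula, trace_formula]
      rw [Complex.sub_re, Complex.ofReal_re, Complex.ofReal_re]
    have hdiagsum : (∑ i, ∑ j, Complex.normSq ((star U * U) i j) * (a i ^ (2 - q) * dlog q (a j)))
        = ∑ i, a i ^ (2 - q) * dlog q (a i) := by
      rw [hU1]
      refine Finset.sum_congr rfl fun i _ => ?_
      rw [Finset.sum_eq_single i]
      · simp [Matrix.one_apply_eq]
      · intro j _ hji
        simp [Matrix.one_apply, Ne.symm hji]
      · simp
    rw [hXtr, hYtr, hmid, hdiagsum]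
    have hL : (∑ i, a i) - ((∑ i, a i ^ (2 - q) * dlog q (a i))
          - ∑ i, ∑ j, w i j * (a i ^ (2 - q) * dlog q (b j)))
        = ∑ i, ∑ j, w i j * (a i - a i ^ (2 - q) * (dlog q (a i) - dlog q (b j))) := by
      have c1 : (∑ i, a i) = ∑ i, ∑ j, w i j * a i := by
        refine Finset.sum_congr rfl fun i _ => ?_
        rw [← Finset.sum_mul, hrow i, one_mul]
      have c2 : (∑ i, a i ^ (2 - q) * dlog q (a i))
          = ∑ i, ∑ j, w i j * (a i ^ (2 - q) * dlog q (a i)) := by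
        refine Finset.sum_congr rfl fun i _ => ?_
        rw [← Finset.sum_mul, hrow i, one_mul]
      rw [c1, c2, ← Finset.sum_sub_distrib, ← Finset.sum_sub_distrib]
      refine Finset.sum_congr rfl fun i _ => ?_
      rw [← Finset.sum_sub_distrib, ← Finset.sum_sub_distrib]
      refine Finset.sum_congr rfl fun j _ => ?_
      ring
    have hR : (∑ j, b j) = ∑ i, ∑ j, w i j * b j := by
      rw [Finset.sum_comm]
      refine Finset.sum_congr rfl fun j _ => ?_
      rw [← Finset.sum_mul, hcol j, one_mul]
    rw [hL, hR]
    refine Finset.sum_le_sum fun i _ => Finset.sum_le_sum fun j _ => ?_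
    exact mul_le_mul_of_nonneg_left (scalar_key q hq hq1 (ha i) (hb j)) (hw0 i j)
  · rw [sub_self, Matrix.mul_zero]
    simp [rtr]
end
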